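/- For any Boolean network f and Boolean configurations x, y, if (x,y) ∈ ga(f) then (x,y) ∈ mp(f); that is, every generalised asynchronous update is reproducible under the most permissive semantics. The update can be simulated by first moving every variable in Δ(x,y) to the appropriate transient value and then collapsing each to its target Boolean value. -/
import Mathlib


open Relation Filter

/-! ### Boolean networks and their semantics -/

abbrev Config (n : ℕ) := Fin n → Bool
abbrev BN (n : ℕ) := Config n → Fin n → Bool

def Delta {n : ℕ} (x y : Config n) : Set (Fin n) := {i | x i ≠ y i}

def fa {n : ℕ} (f : BN n) (x y : Config n) : Prop :=
  ∃ i, Delta x y = {i} ∧ f x i = y i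

def syn {n : ℕ} (f : BN n) (x y : Config n) : Prop := ∀ i, f x i = y i

def ga {n : ℕ} (f : BN n) (x y : Config n) : Prop := ∀ i ∈ Delta x y, f x i = y i

/-! ### Most permissive semantics -/

inductive MPV where
  | b : Bool → MPV
  | up : MPV
  | down : MPV
deriving DecidableEq

abbrev MPConfig (n : ℕ) := Fin n → MPV

def toMP {n : ℕ} (x : Config n) : MPConfig n := fun i => .b (x i)

def beta {n : ℕ} (xh : MPConfig n) : Set (Config n) :=
  {x | ∀ i v, xh i = .b v → x i = v}

def mpStep {n : ℕ} (f : BN n) (xh yh : MPConfig n) : Prop :=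
  ∃ i, (∀ j, j ≠ i → xh j = yh j) ∧ xh i ≠ yh i ∧
    ((xh i = .up ∧ yh i = .b true) ∨
     (xh i = .down ∧ yh i = .b false) ∨
     (xh i ≠ .b true ∧ yh i = .up ∧ ∃ x ∈ beta xh, f x i = true) ∨
     (xh i ≠ .b false ∧ yh i = .down ∧ ∃ x ∈ beta xh, f x i = false))

def mp {n : ℕ} (f : BN n) (x y : Config n) : Prop :=
  ReflTransGen (mpStep f) (toMP x) (toMP y)

/-! ### Petri nets (discrete and continuous) -/

structure Net (P T : Type) where
  wPT : P → T → ℕ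
  wTP : T → P → ℕ

def dfire {P T : Type} (N : Net P T) (t : T) (M M' : P → ℕ) : Prop :=
  (∀ p, N.wPT p t ≤ M p) ∧ ∀ p, M' p = M p - N.wPT p t + N.wTP t p

def dReach {P T : Type} (N : Net P T) : (P → ℕ) → (P → ℕ) → Prop :=
  ReflTransGen (fun M M' => ∃ t, dfire N t M M')

def cfire {P T : Type} (N : Net P T) (t : T) (α : ℝ) (m m' : P → ℝ) : Prop :=
  0 ≤ α ∧ (∀ p, α * N.wPT p t ≤ m p) ∧
    ∀ p, m' p = m p - α * N.wPT p t + α * N.wTP t p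

def cReach {P T : Type} (N : Net P T) : (P → ℝ) → (P → ℝ) → Prop :=
  ReflTransGen (fun m m' => ∃ t α, cfire N t α m m')

def limReach {P T : Type} (N : Net P T) (m m' : P → ℝ) : Prop :=
  ∃ ms : ℕ → P → ℝ, ms 0 = m ∧
    (∀ k, ∃ t α, cfire N t α (ms k) (ms (k+1))) ∧
    Tendsto ms atTop (nhds m')

def IsTrap {P T : Type} (N : Net P T) (S : Set P) : Prop :=
  ∀ t, (∃ p ∈ S, 0 < N.wPT p t) → ∃ p ∈ S, 0 < N.wTP t p

def enabPos {P T : Type} (N : Net P T) (t : T) (m : P → ℝ) : Prop :=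
  ∀ p, 0 < N.wPT p t → 0 < m p

def enabGe {P T : Type} (N : Net P T) (t : T) (m : P → ℝ) (c : ℝ) : Prop :=
  ∀ p, 0 < N.wPT p t → c * N.wPT p t ≤ m p

/-! ### Petri net encoding of Boolean networks -/

abbrev Clause (n : ℕ) := Fin n → Option Bool

def satC {n : ℕ} (z : Config n) (C : Clause n) : Prop :=
  ∀ j v, C j = some v → z j = v

structure ETrans (n : ℕ) where
  i : Fin n
  s : Bool
  C : Clause n

abbrev EPlace (n : ℕ) := Fin n × Bool

def encNet (n : ℕ) : Net (EPlace n) (ETrans n) where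
  wPT := fun p t =>
    if p.1 = t.i then (if p.2 = !t.s then 1 else 0)
    else (if t.C p.1 = some p.2 then 1 else 0)
  wTP := fun t p =>
    if p.1 = t.i then (if p.2 = t.s then 1 else 0)
    else (if t.C p.1 = some p.2 then 1 else 0)

def mu {n : ℕ} (xh : MPConfig n) : Set (EPlace n → ℝ) :=
  {m | (∀ p, 0 ≤ m p) ∧ ∀ i,
    m (i, false) + m (i, true) = 1 ∧
    (∀ v, xh i = .b v → m (i, v) = 1) ∧
    ((xh i = .up ∨ xh i = .down) →
      0 < m (i, false) ∧ m (i, false) < 1 ∧ 0 < m (i, true) ∧ m (i, true) < 1)}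

noncomputable def canon {n : ℕ} (xh : MPConfig n) : EPlace n → ℝ := fun p =>
  match xh p.1 with
  | .b v => if p.2 = v then 1 else 0
  | _ => 1/2

def validT {n : ℕ} (D : Fin n → Bool → Set (Clause n)) (t : ETrans n) : Prop :=
  t.C ∈ D t.i t.s

def IsDNF {n : ℕ} (f : BN n) (D : Fin n → Bool → Set (Clause n)) : Prop :=
  (∀ i s z, (∃ C ∈ D i s, satC z C) ↔ (z i = !s ∧ f z i = s)) ∧
  (∀ i s C, C ∈ D i s → C i = some (!s))

def cReachG {P T : Type} (N : Net P T) (good : T → Prop) :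
    (P → ℝ) → (P → ℝ) → Prop :=
  ReflTransGen (fun m m' => ∃ t, good t ∧ ∃ α, cfire N t α m m')

def climReachG {P T : Type} (N : Net P T) (good : T → Prop) (m m' : P → ℝ) : Prop :=
  ∃ ms : ℕ → P → ℝ, ms 0 = m ∧
    (∀ k, ∃ t, good t ∧ ∃ α, cfire N t α (ms k) (ms (k+1))) ∧
    Tendsto ms atTop (nhds m')

/-- every generalised asynchronous update is reproducible
under the most permissive semantics. -/
theorem ga_subset_mp {n : ℕ} (f : BN n) (x y : Config n) :
    ga f x y → mp f x y := by
  intro hga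
  classical
  let D : Finset (Fin n) := Finset.univ.filter (fun i => x i ≠ y i)
  let h : Finset (Fin n) → MPConfig n := fun s i =>
    if i ∈ s then (if y i then .up else .down) else .b (x i)
  have phase1 : ∀ s : Finset (Fin n), s ⊆ D → ReflTransGen (mpStep f) (toMP x) (h s) := by
    intro s
    induction s using Finset.induction with
    | empty =>
      intro _
      have he : h ∅ = toMP x := by funext i; simp [h, toMP]
      rw [he]
    | @insert a s ha ih =>
      intro hsub
      refine ReflTransGen.tail (ih (fun i hi => hsub (Finset.mem_insert_of_mem hi))) ?_
      have haD : x a ≠ y a := by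
        have := hsub (Finset.mem_insert_self a s)
        simpa [D] using this
      have hx : x ∈ beta (h s) := by
        intro j v hv
        by_cases hj : j ∈ s
        · cases hy : y j <;> simp [h, hj, hy] at hv
        · simp [h, hj] at hv; exact hv
      refine ⟨a, ?_, ?_, ?_⟩
      · intro j hj; simp [h, Finset.mem_insert, hj]
      · cases hy : y a <;> simp [h, ha, hy]
      · cases hy : y a with
        | true =>
          refine Or.inr (Or.inr (Or.inl ⟨?_, ?_, x, hx, ?_⟩))
          · simp only [h, if_neg ha]
            intro hc
            exact haD (by rw [show x a = true from MPV.b.inj hc, hy])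
          · simp [h, hy]
          · rw [hga a (by simpa [Delta] using haD), hy]
        | false =>
          refine Or.inr (Or.inr (Or.inr ⟨?_, ?_, x, hx, ?_⟩))
          · simp only [h, if_neg ha]
            intro hc
            exact haD (by rw [show x a = false from MPV.b.inj hc, hy])
          · simp [h, hy]
          · rw [hga a (by simpa [Delta] using haD), hy]
  let g : Finset (Fin n) → MPConfig n := fun s i =>
    if i ∈ s then .b (y i) else h D i
  have phase2 : ∀ s : Finset (Fin n), s ⊆ D → ReflTransGen (mpStep f) (h D) (g s) := by
    intro s
    induction s using Finset.induction with
    | empty =>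
      intro _
      have he : g ∅ = h D := by funext i; simp [g]
      rw [he]
    | @insert a s ha ih =>
      intro hsub
      refine ReflTransGen.tail (ih (fun i hi => hsub (Finset.mem_insert_of_mem hi))) ?_
      have haD : a ∈ D := hsub (Finset.mem_insert_self a s)
      refine ⟨a, ?_, ?_, ?_⟩
      · intro j hj; simp [g, Finset.mem_insert, hj]
      · cases hy : y a <;> simp [g, h, ha, haD, hy]
      · cases hy : y a with
        | true => exact Or.inl ⟨by simp [g, h, ha, haD, hy], by simp [g, hy]⟩
        | false => exact Or.inr (Or.inl ⟨by simp [g, h, ha, haD, hy], by simp [g, hy]⟩)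
  have hgD : g D = toMP y := by
    funext i
    by_cases hi : i ∈ D
    · simp [g, hi, toMP]
    · have hxy : x i = y i := by
        by_contra hc
        exact hi (by simp [D, hc])
      simp [g, hi, toMP, h, hxy]
  have htot := (phase1 D (le_refl _)).trans (phase2 D (le_refl _))
  rw [hgD] at htot
  exact htot
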